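/- Hereditarily finite set encoding of an n-ary relation: given a decidable n-ary relation R : X^n → Prop on a finite, discrete, inhabited type X, one can compute a finite type Y with a decidable binary relation ∈ : Y → Y → Prop, distinguished elements d, r : Y, and maps i : X → Y and s : Y → X such that (1) i x ∈ d for all x : X, (2) every y ∈ d equals i x for some x, and (3) for every vector v : X^n, R v holds iff the Kuratowski-encoded n-tuple (i v₁, …, i vₙ) is a member of r. -/

import Mathlib

/-- A first-order signature: function and relation symbols with arities. -/
structure Sig where
  F : Type
  P : Type
  arF : F → Nat
  arP : P → Nat

/-- First-order terms over a signature (de Bruijn variables). -/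
inductive Tm (S : Sig) : Type where
  | var : Nat → Tm S
  | func : (f : S.F) → (Fin (S.arF f) → Tm S) → Tm S

/-- First-order formulas over a signature (de Bruijn binders). -/
inductive Fml (S : Sig) : Type where
  | fal : Fml S
  | atom : (P : S.P) → (Fin (S.arP P) → Tm S) → Fml S
  | imp : Fml S → Fml S → Fml S
  | conj : Fml S → Fml S → Fml S
  | disj : Fml S → Fml S → Fml S
  | all : Fml S → Fml S
  | ex : Fml S → Fml S

/-- A model: interpretations of function and relation symbols over a domain. -/
structure Model (S : Sig) (D : Type) where
  fi : (f : S.F) → (Fin (S.arF f) → D) → D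
  pi : (P : S.P) → (Fin (S.arP P) → D) → Prop

/-- Evaluation of terms under an assignment. -/
def evalTm {S : Sig} {D : Type} (M : Model S D) (ρ : Nat → D) : Tm S → D
  | .var x => ρ x
  | .func f v => M.fi f (fun i => evalTm M ρ (v i))

/-- de Bruijn extension of an assignment by a value. -/
def scons {D : Type} (a : D) (ρ : Nat → D) : Nat → D
  | 0 => a
  | n + 1 => ρ n

/-- Tarski satisfaction. -/
def Sat {S : Sig} {D : Type} (M : Model S D) : (Nat → D) → Fml S → Prop
  | _, .fal => False
  | ρ, .atom P v => M.pi P (fun i => evalTm M ρ (v i))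
  | ρ, .imp φ ψ => Sat M ρ φ → Sat M ρ ψ
  | ρ, .conj φ ψ => Sat M ρ φ ∧ Sat M ρ ψ
  | ρ, .disj φ ψ => Sat M ρ φ ∨ Sat M ρ ψ
  | ρ, .all φ => ∀ a : D, Sat M (scons a ρ) φ
  | ρ, .ex φ => ∃ a : D, Sat M (scons a ρ) φ

/-- All relation symbols are interpreted decidably (by Boolean functions). -/
def DecRels {S : Sig} {D : Type} (M : Model S D) : Prop :=
  ∀ P : S.P, ∃ g : (Fin (S.arP P) → D) → Bool, ∀ v, M.pi P v ↔ g v = true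

/-- Finite satisfiability: a finite decidable model. -/
def FSAT (S : Sig) (φ : Fml S) : Prop :=
  ∃ (D : Type) (l : List D) (M : Model S D) (ρ : Nat → D),
    (∀ x : D, x ∈ l) ∧ DecRels M ∧ Sat M ρ φ

/-- Finite satisfiability over a discrete domain. -/
def FSAT' (S : Sig) (φ : Fml S) : Prop :=
  ∃ (D : Type) (_ : DecidableEq D) (l : List D) (M : Model S D) (ρ : Nat → D),
    (∀ x : D, x ∈ l) ∧ DecRels M ∧ Sat M ρ φ

/-- Function symbols occurring in a term. -/
def tmF {S : Sig} : Tm S → List S.F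
  | .var _ => []
  | .func f v => f :: (List.finRange (S.arF f)).flatMap (fun i => tmF (v i))

/-- Function symbols occurring in a formula. -/
def frmF {S : Sig} : Fml S → List S.F
  | .fal => []
  | .atom _ v => (List.finRange _).flatMap (fun i => tmF (v i))
  | .imp φ ψ => frmF φ ++ frmF ψ
  | .conj φ ψ => frmF φ ++ frmF ψ
  | .disj φ ψ => frmF φ ++ frmF ψ
  | .all φ => frmF φ
  | .ex φ => frmF φ

/-- Relation symbols occurring in a formula. -/
def frmP {S : Sig} : Fml S → List S.P
  | .fal => []
  | .atom P _ => [P]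
  | .imp φ ψ => frmP φ ++ frmP ψ
  | .conj φ ψ => frmP φ ++ frmP ψ
  | .disj φ ψ => frmP φ ++ frmP ψ
  | .all φ => frmP φ
  | .ex φ => frmP φ

/-- Extensional identity with respect to an abstract membership relation. -/
def ExtEq {Y : Type} (mem : Y → Y → Prop) (x y : Y) : Prop :=
  ∀ z : Y, mem z x ↔ mem z y

/-- `p` represents the unordered pair `{x, y}`. -/
def IsPair {Y : Type} (mem : Y → Y → Prop) (p x y : Y) : Prop :=
  ∀ a : Y, mem a p ↔ ExtEq mem a x ∨ ExtEq mem a y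

/-- `p` represents the Kuratowski ordered pair `(x, y) = {{x}, {x, y}}`. -/
def IsOPair {Y : Type} (mem : Y → Y → Prop) (p x y : Y) : Prop :=
  ∃ a b : Y, IsPair mem a x x ∧ IsPair mem b x y ∧ IsPair mem p a b

/-- `t` represents the tuple `v` (as iterated Kuratowski pairs). -/
def IsTuple {Y : Type} (mem : Y → Y → Prop) : Y → List Y → Prop
  | t, [] => ∀ a : Y, ¬ mem a t
  | t, x :: v => ∃ p : Y, IsOPair mem t x p ∧ IsTuple mem p v

/-- The encoded tuple `v` is a member of `r`. -/
def TupleIn {Y : Type} (mem : Y → Y → Prop) (v : List Y) (r : Y) : Prop :=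
  ∃ t : Y, IsTuple mem t v ∧ mem t r


/-- Pair code: `{x, y}` in the Ackermann encoding. -/
def pc (x y : ℕ) : ℕ := 2 ^ x ||| 2 ^ y

/-- Ordered-pair code: `(x, y) = {{x},{x,y}}`. -/
def oc (x y : ℕ) : ℕ := pc (pc x x) (pc x y)

/-- Tuple code. -/
def tcode : List ℕ → ℕ
  | [] => 0
  | x :: l => oc x (tcode l)

/-- Set-of-list code. -/
def sol : List ℕ → ℕ
  | [] => 0
  | x :: l => 2 ^ x ||| sol l

lemma mem_pc {x y k : ℕ} : (pc x y).testBit k = true ↔ k = x ∨ k = y := by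
  simp only [pc, Nat.testBit_or, Nat.testBit_two_pow, Bool.or_eq_true, decide_eq_true_eq]
  omega

lemma mem_sol {L : List ℕ} {k : ℕ} : (sol L).testBit k = true ↔ k ∈ L := by
  induction L with
  | nil => simp [sol]
  | cons a L ih =>
    simp only [sol, Nat.testBit_or, Nat.testBit_two_pow, Bool.or_eq_true, decide_eq_true_eq, ih,
      List.mem_cons]
    tauto

lemma lt_of_testBit {m k : ℕ} (h : m.testBit k = true) : k < m := by
  by_contra hk
  push_neg at hk
  have : m < 2 ^ k := lt_of_le_of_lt hk (Nat.lt_two_pow_self (n := k))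
  simp [Nat.testBit_lt_two_pow this] at h

lemma pc_ext {x y x' y' : ℕ} (h : pc x y = pc x' y') (k : ℕ) :
    (k = x ∨ k = y) ↔ (k = x' ∨ k = y') := by
  rw [← @mem_pc x y k, ← @mem_pc x' y' k, h]

lemma pc_inj {x y x' y' : ℕ} (h : pc x y = pc x' y') :
    (x = x' ∧ y = y') ∨ (x = y' ∧ y = x') := by
  have h1 := (pc_ext h x).1 (Or.inl rfl)
  have h2 := (pc_ext h y).1 (Or.inr rfl)
  have h3 := (pc_ext h x').2 (Or.inl rfl)
  have h4 := (pc_ext h y').2 (Or.inr rfl)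
  rcases h1 with h1 | h1 <;> rcases h2 with h2 | h2 <;>
    rcases h3 with h3 | h3 <;> rcases h4 with h4 | h4 <;> omega

lemma oc_inj {x p x' p' : ℕ} (h : oc x p = oc x' p') : x = x' ∧ p = p' := by
  rcases pc_inj h with ⟨h1, h2⟩ | ⟨h1, h2⟩
  · rcases pc_inj h1 with ⟨e1, _⟩ | ⟨e1, _⟩ <;>
    · subst e1
      rcases pc_inj h2 with ⟨_, e2⟩ | ⟨e2, e3⟩
      · exact ⟨rfl, e2⟩
      · exact ⟨rfl, by omega⟩
  · rcases pc_inj h1 with ⟨e1, e2⟩ | ⟨e1, e2⟩ <;>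
      rcases pc_inj h2 with ⟨e3, e4⟩ | ⟨e3, e4⟩ <;> omega

lemma tcode_inj : ∀ (l l' : List ℕ), l.length = l'.length → tcode l = tcode l' → l = l' := by
  intro l
  induction l with
  | nil => intro l' hl _; cases l' <;> simp_all
  | cons a l ih =>
    intro l' hl h
    cases l' with
    | nil => simp at hl
    | cons b l' =>
      rcases oc_inj h with ⟨e1, e2⟩
      simp_all [ih l' (by simpa using hl) e2]

/-- Membership on `Fin N` via the Ackermann encoding. -/
def memF (N : ℕ) : Fin N → Fin N → Prop := fun a b => b.1.testBit a.1 = true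

lemma extEq_iff {N : ℕ} {a b : Fin N} : ExtEq (memF N) a b ↔ a = b := by
  constructor
  · intro h
    apply Fin.ext
    apply Nat.eq_of_testBit_eq
    intro k
    by_cases hk : k < N
    · have := h ⟨k, hk⟩
      simp only [memF] at this
      cases ha : a.1.testBit k <;> cases hb : b.1.testBit k <;> simp_all
    · push_neg at hk
      have ha : a.1 < 2 ^ k := lt_trans (lt_of_lt_of_le a.2 hk) (Nat.lt_two_pow_self (n := k))
      have hb : b.1 < 2 ^ k := lt_trans (lt_of_lt_of_le b.2 hk) (Nat.lt_two_pow_self (n := k))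
      rw [Nat.testBit_lt_two_pow ha, Nat.testBit_lt_two_pow hb]
  · rintro rfl
    exact fun z => Iff.rfl

lemma isPair_iff {N : ℕ} {p x y : Fin N} :
    IsPair (memF N) p x y ↔ p.1 = pc x.1 y.1 := by
  constructor
  · intro h
    apply Nat.eq_of_testBit_eq
    intro k
    by_cases hk : k < N
    · have h2 : p.1.testBit k = true ↔ (pc x.1 y.1).testBit k = true := by
        rw [mem_pc]
        simpa [memF, extEq_iff, Fin.ext_iff] using h ⟨k, hk⟩
      cases ha : p.1.testBit k <;> cases hb : (pc x.1 y.1).testBit k <;> simp_all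
    · push_neg at hk
      have hx := x.2
      have hy := y.2
      have h1 : p.1.testBit k = false :=
        Nat.testBit_lt_two_pow (lt_trans (lt_of_lt_of_le p.2 hk) (Nat.lt_two_pow_self (n := k)))
      have h2 : (pc x.1 y.1).testBit k = false := by
        cases hb : (pc x.1 y.1).testBit k
        · rfl
        · rcases mem_pc.1 hb with h | h <;> omega
      rw [h1, h2]
  · intro h a
    simp only [memF, h, mem_pc, Fin.ext_iff, extEq_iff]

lemma isTuple_code {N : ℕ} : ∀ (l : List (Fin N)) (t : Fin N),
    IsTuple (memF N) t l → t.1 = tcode (l.map Fin.val) := by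
  intro l
  induction l with
  | nil =>
    intro t h
    simp only [IsTuple] at h
    apply Nat.eq_of_testBit_eq
    intro k
    simp only [List.map_nil, tcode, Nat.zero_testBit]
    cases hk : t.1.testBit k
    · rfl
    · have hkN : k < N := lt_trans (lt_of_testBit hk) t.2
      exact absurd hk (h ⟨k, hkN⟩)
  | cons x l ih =>
    intro t h
    obtain ⟨p, ⟨a, b, ha, hb, hp⟩, htail⟩ := h
    rw [isPair_iff] at ha hb hp
    simp only [List.map_cons, tcode]
    rw [hp, ha, hb, ih p htail]
    rfl

lemma isTuple_of_code {N : ℕ} : ∀ (l : List (Fin N)) (t : Fin N),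
    t.1 = tcode (l.map Fin.val) → IsTuple (memF N) t l := by
  intro l
  induction l with
  | nil =>
    intro t ht a hma
    simp [memF, ht, List.map_nil, tcode, Nat.zero_testBit] at hma
  | cons x l ih =>
    intro t ht
    simp only [List.map_cons, tcode, oc] at ht
    have hbN : pc x.1 (tcode (l.map Fin.val)) < N := by
      have hm : t.1.testBit (pc x.1 (tcode (l.map Fin.val))) = true := by
        rw [ht]; exact mem_pc.2 (Or.inr rfl)
      exact lt_trans (lt_of_testBit hm) t.2
    have haN : pc x.1 x.1 < N := by
      have hm : t.1.testBit (pc x.1 x.1) = true := by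
        rw [ht]; exact mem_pc.2 (Or.inl rfl)
      exact lt_trans (lt_of_testBit hm) t.2
    have hcN : tcode (l.map Fin.val) < N := by
      have hm : (pc x.1 (tcode (l.map Fin.val))).testBit (tcode (l.map Fin.val)) = true :=
        mem_pc.2 (Or.inr rfl)
      exact lt_trans (lt_of_testBit hm) hbN
    exact ⟨⟨tcode (l.map Fin.val), hcN⟩,
      ⟨⟨pc x.1 x.1, haN⟩, ⟨pc x.1 (tcode (l.map Fin.val)), hbN⟩,
        isPair_iff.2 rfl, isPair_iff.2 rfl, isPair_iff.2 ht⟩,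
      ih ⟨tcode (l.map Fin.val), hcN⟩ rfl⟩

/-- Hereditarily finite set encoding of an `n`-ary decidable relation on a
finite, discrete, inhabited type. -/
theorem reln_hfs {X : Type} [DecidableEq X] (x₀ : X)
    (lX : List X) (hlX : ∀ x : X, x ∈ lX)
    (n : ℕ) (R : (Fin n → X) → Prop)
    (hR : ∃ g : (Fin n → X) → Bool, ∀ v, R v ↔ g v = true) :
    ∃ (Y : Type) (lY : List Y) (mem : Y → Y → Prop) (d r : Y)
      (i : X → Y) (s : Y → X),
      (∀ y : Y, y ∈ lY) ∧
      (∃ g : Y → Y → Bool, ∀ a b : Y, mem a b ↔ g a b = true) ∧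
      (∀ x : X, mem (i x) d) ∧
      (∀ y : Y, mem y d → ∃ x : X, y = i x) ∧
      (∀ v : Fin n → X,
        R v ↔ TupleIn mem ((List.finRange n).map (fun j => i (v j))) r) := by
  obtain ⟨g, hg⟩ := hR
  haveI : Fintype X := ⟨lX.toFinset, fun x => List.mem_toFinset.2 (hlX x)⟩
  classical
  let iN : X → ℕ := fun x => lX.idxOf x
  let vecs : List (Fin n → X) := (Finset.univ : Finset (Fin n → X)).toList
  let code : (Fin n → X) → ℕ := fun v => tcode ((List.finRange n).map (fun j => iN (v j)))
  let dN : ℕ := sol (lX.map iN)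
  let rN : ℕ := sol ((vecs.filter g).map code)
  let N : ℕ := max dN rN + 1
  have hdlt : dN < N := by omega
  have hrlt : rN < N := by omega
  have hiNd : ∀ x : X, dN.testBit (iN x) = true := fun x =>
    mem_sol.2 (List.mem_map.2 ⟨x, hlX x, rfl⟩)
  have hiNlt : ∀ x : X, iN x < N := fun x => lt_trans (lt_of_testBit (hiNd x)) hdlt
  refine ⟨Fin N, List.finRange N, memF N, ⟨dN, hdlt⟩, ⟨rN, hrlt⟩,
    fun x => ⟨iN x, hiNlt x⟩, fun _ => x₀, fun y => List.mem_finRange y,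
    ⟨fun a b => b.1.testBit a.1, fun a b => Iff.rfl⟩, fun x => hiNd x, ?_, ?_⟩
  · intro y hy
    obtain ⟨x, hx, he⟩ := List.mem_map.1 (mem_sol.1 hy)
    exact ⟨x, Fin.ext he.symm⟩
  · intro v
    rw [hg]
    constructor
    · intro hgv
      have hcv : rN.testBit (code v) = true :=
        mem_sol.2 (List.mem_map.2 ⟨v,
          List.mem_filter.2 ⟨Finset.mem_toList.2 (Finset.mem_univ v), hgv⟩, rfl⟩)
      have hclt : code v < N := lt_trans (lt_of_testBit hcv) hrlt
      refine ⟨⟨code v, hclt⟩, ?_, hcv⟩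
      apply isTuple_of_code
      show code v = tcode _
      simp only [code, List.map_map]
      rfl
    · rintro ⟨t, htup, hmem⟩
      have ht : t.1 = code v := by
        rw [isTuple_code _ t htup]
        simp only [code, List.map_map]
        rfl
      obtain ⟨v', hv', he⟩ := List.mem_map.1 (mem_sol.1 (show rN.testBit t.1 = true from hmem))
      have hcc : code v' = code v := by rw [he, ht]
      have hlists := tcode_inj _ _ (by simp) hcc
      have hvv : v' = v := by
        funext j
        have hj := List.map_inj_left.1 hlists j (List.mem_finRange j)
        exact (List.idxOf_inj (hlX (v' j))).1 hj
      rw [← hvv]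
      exact (List.mem_filter.1 hv').2
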